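/- The outer-bound expression is nondecreasing in the in-block memory length: U(L) ≤ U(L+1) for every integer L ≥ 1. -/

import Mathlib

open Finset Filter Topology

/-- Binary entropy function with base-2 logarithm. `Real.logb 2 0 = 0`, so
`H2 0 = H2 1 = 0` automatically. -/
noncomputable def H2 (p : ℝ) : ℝ :=
  -(p * Real.logb 2 p) - (1 - p) * Real.logb 2 (1 - p)

/-- Partial sums `s_j = ∑_{k=1}^j c_k` of the beam-budget sequence. -/
noncomputable def s (K B : ℝ) : ℕ → ℝ
  | 0 => 0
  | (j+1) => s K B j + min ((K - s K B j) / 2) B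

/-- The beam-budget sequence: `c_0 = 0` and `c_j = min((K - s_{j-1})/2, B)` for `j ≥ 1`. -/
noncomputable def c (K B : ℝ) : ℕ → ℝ
  | 0 => 0
  | (j+1) => min ((K - s K B j) / 2) B

/-- The `j`-th term of the outer bound (Theorem 1), for `j ≥ 1`. -/
noncomputable def t (K B : ℝ) (j : ℕ) : ℝ :=
  (1 - s K B (j-1) / K) * H2 (c K B j / (K - s K B (j-1))) + s K B (j-1) / K

/-- The outer-bound (Theorem 1) expression `U(L)`. -/
noncomputable def U (K B : ℝ) (L : ℕ) : ℝ :=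
  (1 / (L : ℝ)) * ∑ j ∈ Finset.Icc 1 L, t K B j

/-- The `j`-th eavesdropper-leakage term, for `j ≥ 1` (natural subtraction makes the
middle term vanish at `j = 1` and the final sum empty for `j ≤ 3`). -/
noncomputable def g (K B : ℝ) (j : ℕ) : ℝ :=
  ((K - s K B (j-1)) / K) * H2 (c K B j / K)
  + (c K B (j-1) * (K - s K B (j-2)) / K^2) *
      H2 ((1/2) * c K B (j-1) / (K - s K B (j-2)))
  + ∑ k ∈ Finset.Icc 1 (j-3),
      (1/K) * ((c K B (k+1))^2 / K^2) * (1/2 : ℝ)^(2*(j-k-2)-1)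

/-- The gap `G(L)` between the outer and inner bounds. -/
noncomputable def G (K B : ℝ) (L : ℕ) : ℝ :=
  (1 / (L : ℝ)) * ∑ j ∈ Finset.Icc 1 L, g K B j

/-- The inner-bound (Theorem 2) expression `I(L) = U(L) - G(L)`. -/
noncomputable def Ib (K B : ℝ) (L : ℕ) : ℝ := U K B L - G K B L

lemma H2_eq (p : ℝ) : H2 p = (-(p * Real.log p) - (1-p) * Real.log (1-p)) / Real.log 2 := by
  simp only [H2, Real.logb]
  ring

lemma log2_pos : (0:ℝ) < Real.log 2 := Real.log_pos (by norm_num)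

lemma H2_half : H2 (1/2 : ℝ) = 1 := by
  have hl : Real.log ((1:ℝ)/2) = -Real.log 2 := by rw [one_div, Real.log_inv]
  rw [H2_eq, show (1:ℝ) - 1/2 = 1/2 by norm_num, hl]
  field_simp
  norm_num

lemma one_sub_inv_le_log (y : ℝ) (hy : 0 < y) : 1 - y⁻¹ ≤ Real.log y := by
  have h := Real.log_le_sub_one_of_pos (inv_pos.2 hy)
  rw [Real.log_inv] at h; linarith

lemma H2_le_one (p : ℝ) (h0 : 0 < p) (h1 : p < 1) : H2 p ≤ 1 := by
  rw [H2_eq, div_le_one log2_pos]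
  have hp1 : (0:ℝ) < 1 - p := by linarith
  have l1 := one_sub_inv_le_log (2*p) (by positivity)
  have l2 := one_sub_inv_le_log (2*(1-p)) (by positivity)
  have m1 := mul_le_mul_of_nonneg_left l1 h0.le
  have m2 := mul_le_mul_of_nonneg_left l2 hp1.le
  rw [Real.log_mul (by norm_num) h0.ne'] at m1
  rw [Real.log_mul (by norm_num) hp1.ne'] at m2
  have e1 : p * (1 - (2*p)⁻¹) = p - 1/2 := by field_simp
  have e2 : (1-p) * (1 - (2*(1-p))⁻¹) = (1-p) - 1/2 := by field_simp
  rw [e1] at m1; rw [e2] at m2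
  nlinarith [m1, m2]

lemma key (x : ℝ) (hx0 : 0 ≤ x) (hx : x ≤ 1/2) :
    (1+x)*Real.log (1+x) + (1-x)*Real.log (1-x) ≤ x * Real.log 2 := by
  have h1x : (0:ℝ) < 1 + x := by linarith
  have h1x' : (0:ℝ) < 1 - x := by linarith
  have hA : Real.log (1+x) + Real.log (1-x) ≤ -x^2 := by
    rw [← Real.log_mul h1x.ne' h1x'.ne']
    have e : (1+x)*(1-x) = 1 - x^2 := by ring
    rw [e]
    have := Real.log_le_sub_one_of_pos (show (0:ℝ) < 1 - x^2 by nlinarith)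
    linarith
  have hB2 : Real.log (1+x) - Real.log (1-x) ≤ Real.log 2 + x := by
    have hexp : x + 1 ≤ Real.exp x := Real.add_one_le_exp x
    have hineq : 1 + x ≤ 2*(1-x)*Real.exp x := by
      nlinarith [mul_le_mul_of_nonneg_left hexp (by linarith : (0:ℝ) ≤ 2*(1-x))]
    have hlog := Real.log_le_log h1x hineq
    rw [Real.log_mul (by positivity) (Real.exp_pos x).ne',
        Real.log_mul (by norm_num) h1x'.ne', Real.log_exp] at hlog
    linarith
  have e : (1+x)*Real.log (1+x) + (1-x)*Real.log (1-x)
      = x*(Real.log (1+x) - Real.log (1-x)) + (Real.log (1+x) + Real.log (1-x)) := by ring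
  rw [e]
  have hm := mul_le_mul_of_nonneg_left hB2 hx0
  nlinarith [hm, hA]

lemma H2_scaled (B ρ : ℝ) (hB : 0 < B) (h : B < ρ) :
    ρ * H2 (B/ρ) = (ρ*Real.log ρ - B*Real.log B - (ρ-B)*Real.log (ρ-B)) / Real.log 2 := by
  have hρ : (0:ℝ) < ρ := hB.trans h
  have hρB : (0:ℝ) < ρ - B := by linarith
  rw [H2_eq, show (1:ℝ) - B/ρ = (ρ-B)/ρ by field_simp,
      Real.log_div hB.ne' hρ.ne', Real.log_div hρB.ne' hρ.ne']
  field_simp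
  ring

lemma core (B a : ℝ) (hB : 0 < B) (ha : 2*B < a) :
    (a+B) * H2 (B/(a+B)) ≤ a * H2 (B/a) + B := by
  have ha0 : (0:ℝ) < a := by linarith
  have hBa : B < a := by linarith
  have hkey := key (B/a) (by positivity) (by rw [div_le_iff₀ ha0]; linarith)
  rw [show (1:ℝ) + B/a = (a+B)/a by field_simp,
      show (1:ℝ) - B/a = (a-B)/a by field_simp,
      Real.log_div (by linarith : a+B ≠ 0) ha0.ne',
      Real.log_div (by intro h; nlinarith [h] : a-B ≠ 0) ha0.ne'] at hkey
  have hkey2 : (a+B)*Real.log (a+B) + (a-B)*Real.log (a-B) - 2*a*Real.log a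
      ≤ B * Real.log 2 := by
    have hm := mul_le_mul_of_nonneg_left hkey ha0.le
    have e1 : a * ((a+B)/a*(Real.log (a+B) - Real.log a) + (a-B)/a*(Real.log (a-B) - Real.log a))
        = (a+B)*Real.log (a+B) + (a-B)*Real.log (a-B) - 2*a*Real.log a := by
      field_simp; ring
    have e2 : a * (B/a * Real.log 2) = B * Real.log 2 := by field_simp
    linarith [e1 ▸ e2 ▸ hm]
  rw [H2_scaled B a hB hBa, H2_scaled B (a+B) hB (by linarith)]
  rw [show a + B - B = a by ring]
  have hQP : (a+B)*Real.log (a+B) - B*Real.log B - a*Real.log a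
      ≤ (a*Real.log a - B*Real.log B - (a-B)*Real.log (a-B)) + B * Real.log 2 := by
    linarith [hkey2]
  calc ((a+B)*Real.log (a+B) - B*Real.log B - a*Real.log a) / Real.log 2
      ≤ ((a*Real.log a - B*Real.log B - (a-B)*Real.log (a-B)) + B * Real.log 2) / Real.log 2 :=
        (div_le_div_iff_of_pos_right log2_pos).2 hQP
    _ = (a*Real.log a - B*Real.log B - (a-B)*Real.log (a-B)) / Real.log 2 + B := by
        rw [add_div, mul_div_assoc, div_self log2_pos.ne', mul_one]

lemma s_spec (Kr B : ℝ) (hK : 0 < Kr) (hB : 0 < B) :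
    ∀ j, 0 ≤ s Kr B j ∧ s Kr B j < Kr := by
  intro j
  induction j with
  | zero => simpa [s] using hK
  | succ n ih =>
    obtain ⟨h0, h1⟩ := ih
    have hmin : 0 < min ((Kr - s Kr B n) / 2) B := lt_min (by linarith) hB
    have hle : min ((Kr - s Kr B n) / 2) B ≤ (Kr - s Kr B n) / 2 := min_le_left _ _
    constructor
    · simp only [s]; linarith
    · simp only [s]; linarith

lemma t_step (Kr B : ℝ) (hK : 0 < Kr) (hB : 0 < B) (m : ℕ) :
    t Kr B (m+1) ≤ t Kr B (m+2) := by
  obtain ⟨hs0, hs1⟩ := s_spec Kr B hK hB m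
  set σ := s Kr B m with hσ
  have hr : 0 < Kr - σ := by linarith
  have ht1 : t Kr B (m+1) = (1 - σ / Kr) * H2 (c Kr B (m+1) / (Kr - σ)) + σ / Kr := rfl
  have ht2 : t Kr B (m+2)
      = (1 - s Kr B (m+1) / Kr) * H2 (c Kr B (m+2) / (Kr - s Kr B (m+1)))
        + s Kr B (m+1) / Kr := rfl
  have hc1e : c Kr B (m+1) = min ((Kr - σ) / 2) B := rfl
  have hc2e : c Kr B (m+2) = min ((Kr - s Kr B (m+1)) / 2) B := rfl
  have hse : s Kr B (m+1) = σ + min ((Kr - σ) / 2) B := rfl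
  by_cases h1 : (Kr - σ)/2 ≤ B
  · -- both terms equal 1
    have hc1 : c Kr B (m+1) = (Kr - σ)/2 := by rw [hc1e, min_eq_left h1]
    have hs1' : s Kr B (m+1) = σ + (Kr - σ)/2 := by rw [hse, min_eq_left h1]
    have hrem : Kr - s Kr B (m+1) = (Kr - σ)/2 := by rw [hs1']; ring
    have hc2 : c Kr B (m+2) = (Kr - s Kr B (m+1))/2 := by
      rw [hc2e, min_eq_left (by rw [hrem]; linarith)]
    have hratio1 : c Kr B (m+1) / (Kr - σ) = 1/2 := by
      rw [hc1]; field_simp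
    have hratio2 : c Kr B (m+2) / (Kr - s Kr B (m+1)) = 1/2 := by
      rw [hc2, hrem]; field_simp
    rw [ht1, ht2, hratio1, hratio2, H2_half]
    ring_nf
    exact le_refl _
  · push_neg at h1
    have hc1 : c Kr B (m+1) = B := by rw [hc1e, min_eq_right h1.le]
    have hs1' : s Kr B (m+1) = σ + B := by rw [hse, min_eq_right h1.le]
    have hrem : Kr - s Kr B (m+1) = (Kr - σ) - B := by rw [hs1']; ring
    have hrB : 0 < (Kr - σ) - B := by linarith
    have hratio1 : c Kr B (m+1) / (Kr - σ) = B / (Kr - σ) := by rw [hc1]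
    have hH1lt : B / (Kr - σ) < 1 := by rw [div_lt_one hr]; linarith
    by_cases h2 : ((Kr - σ) - B)/2 ≤ B
    · -- second term equals 1, first ≤ 1
      have hc2 : c Kr B (m+2) = (Kr - s Kr B (m+1))/2 := by
        rw [hc2e, min_eq_left (by rw [hrem]; linarith)]
      have hratio2 : c Kr B (m+2) / (Kr - s Kr B (m+1)) = 1/2 := by
        rw [hc2, hrem]; field_simp
      rw [ht1, ht2, hratio1, hratio2, H2_half]
      have hH : H2 (B / (Kr - σ)) ≤ 1 := H2_le_one _ (by positivity) hH1lt
      have hσK : σ / Kr < 1 := (div_lt_one hK).2 hs1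
      have hnn : 0 ≤ 1 - σ / Kr := by linarith
      nlinarith [mul_le_mul_of_nonneg_left hH hnn]
    · push_neg at h2
      have hc2 : c Kr B (m+2) = B := by
        rw [hc2e, min_eq_right (by rw [hrem]; linarith)]
      have ha : 2*B < (Kr - σ) - B := by linarith
      have hcore := core B ((Kr - σ) - B) hB ha
      rw [show (Kr - σ) - B + B = Kr - σ by ring] at hcore
      have hratio2 : c Kr B (m+2) / (Kr - s Kr B (m+1)) = B / ((Kr - σ) - B) := by
        rw [hc2, hrem]
      rw [ht1, ht2, hratio1, hratio2, hs1']
      have e1 : 1 - σ / Kr = (Kr - σ)/Kr := by field_simp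
      have e2 : 1 - (σ + B) / Kr = ((Kr - σ) - B)/Kr := by field_simp; ring
      rw [e1, e2]
      rw [div_mul_eq_mul_div, div_mul_eq_mul_div, ← add_div, ← add_div,
          div_le_div_iff₀ hK hK]
      nlinarith [hcore]

lemma t_mono (Kr B : ℝ) (hK : 0 < Kr) (hB : 0 < B) {j k : ℕ} (hj : 1 ≤ j) (hjk : j ≤ k) :
    t Kr B j ≤ t Kr B k := by
  induction k, hjk using Nat.le_induction with
  | base => exact le_refl _
  | succ n hn ih =>
    have hn1 : 1 ≤ n := le_trans hj hn
    obtain ⟨m, rfl⟩ := Nat.exists_eq_add_of_le' hn1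
    exact le_trans ih (t_step Kr B hK hB m)

theorem stmt_8 (K : ℕ) (hK : 2 ≤ K) (B : ℝ) (hB : 0 < B) :
    ∀ L : ℕ, 1 ≤ L → U K B L ≤ U K B (L+1) := by
  intro L hL
  have hKr : (0:ℝ) < (K:ℝ) := by
    have : (2:ℝ) ≤ (K:ℝ) := by exact_mod_cast hK
    linarith
  have hL0 : (0:ℝ) < (L:ℝ) := by exact_mod_cast hL
  have hsum : ∑ j ∈ Finset.Icc 1 L, t (K:ℝ) B j ≤ (L:ℝ) * t (K:ℝ) B (L+1) := by
    have h := Finset.sum_le_card_nsmul (Finset.Icc 1 L) (t (K:ℝ) B) (t (K:ℝ) B (L+1))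
      (fun j hj => by
        obtain ⟨hj1, hj2⟩ := Finset.mem_Icc.mp hj
        exact t_mono (K:ℝ) B hKr hB hj1 (hj2.trans (Nat.le_succ L)))
    rwa [Nat.card_Icc, Nat.add_sub_cancel, nsmul_eq_mul] at h
  rw [U, U, Finset.sum_Icc_succ_top (by omega : 1 ≤ L+1)]
  have e1 : (1:ℝ)/(L:ℝ) * ∑ j ∈ Finset.Icc 1 L, t (K:ℝ) B j
      = (∑ j ∈ Finset.Icc 1 L, t (K:ℝ) B j) / (L:ℝ) := by ring
  have e2 : (1:ℝ)/((L+1 : ℕ):ℝ) * ((∑ j ∈ Finset.Icc 1 L, t (K:ℝ) B j) + t (K:ℝ) B (L+1))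
      = ((∑ j ∈ Finset.Icc 1 L, t (K:ℝ) B j) + t (K:ℝ) B (L+1)) / ((L:ℝ)+1) := by
    push_cast; ring
  rw [e1, e2, div_le_div_iff₀ hL0 (by linarith)]
  nlinarith [hsum]
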